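/- arXiv:2204.00744 — 3 statements merged into one kernel-verified Lean document; each statement's English description precedes it below -/
import Mathlib

section
/- Let κ ∈ ℂ and let ψ : ℝ → ℂ be differentiable such that for every t ∈ ℝ, ψ(t) ≠ 0 and ψ(t) + κ lies in the slit plane (i.e., ψ(t) + κ is not a nonpositive real number). Define the alternative infinitesimal generator α(t) = Log(ψ(t) + κ), so that exp(α(t)) = ψ(t) + κ. Then for every t ∈ ℝ, 1 − κ · exp(−α(t)) ≠ 0 and the generalized logarithmic representation ψ'(t)/ψ(t) = (1 − κ · exp(−α(t)))⁻¹ · α'(t) holds. -/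
/-- Scalar generalized logarithmic representation: with `α = Log(ψ + κ)`,
`ψ'/ψ = (1 − κ e^{−α})⁻¹ α'`. -/
theorem stmt_8 (κ : ℂ) (ψ : ℝ → ℂ) (hψ : Differentiable ℝ ψ)
    (hne : ∀ t : ℝ, ψ t ≠ 0)
    (hslit : ∀ t : ℝ, ψ t + κ ∈ Complex.slitPlane)
    (α : ℝ → ℂ) (hα : ∀ t : ℝ, α t = Complex.log (ψ t + κ)) :
    ∀ t : ℝ, (1 - κ * Complex.exp (-α t)) ≠ 0 ∧
      deriv ψ t / ψ t = (1 - κ * Complex.exp (-α t))⁻¹ * deriv α t := by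
  intro t
  have hz : ψ t + κ ≠ 0 := Complex.slitPlane_ne_zero (hslit t)
  have hexp : Complex.exp (α t) = ψ t + κ := by
    rw [hα]; exact Complex.exp_log hz
  have h1 : 1 - κ * Complex.exp (-α t) = ψ t / (ψ t + κ) := by
    rw [Complex.exp_neg, hexp]
    field_simp
    ring
  have hne0 : (1 - κ * Complex.exp (-α t)) ≠ 0 := by
    rw [h1]; exact div_ne_zero (hne t) hz
  refine ⟨hne0, ?_⟩
  have hd : HasDerivAt ψ (deriv ψ t) t := (hψ t).hasDerivAt
  have hdα : HasDerivAt α (deriv ψ t / (ψ t + κ)) t := by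
    have h := HasDerivAt.clog_real (hd.add_const κ) (hslit t)
    exact h.congr_of_eventuallyEq (Filter.Eventually.of_forall hα)
  rw [hdα.deriv, h1]
  field_simp
end

section
/- Let κ ∈ ℂ, n ≥ 1 an integer, and let ψ : ℝ → ℂ be n-times differentiable such that for every 1 ≤ k ≤ n and every t ∈ ℝ, ∂^{k−1}ψ(t) ≠ 0 and ∂^{k−1}ψ(t) + κ lies in the slit plane (i.e., it is not a nonpositive real number). Then the n-th order generator is the product of logarithmic representations: ψ(t)⁻¹ · ∂ⁿψ(t) = ∏_{k=1}^{n} (1 + κ · (∂^{k−1}ψ(t))⁻¹) · (d/dt)[Log(∂^{k−1}ψ(t) + κ)] for all t ∈ ℝ. -/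
/-- Scalar form of Theorem 2: the n-th order generator is a product of
logarithmic representations. -/
theorem stmt_9 (κ : ℂ) (n : ℕ) (hn : 1 ≤ n)
    (ψ : ℝ → ℂ) (hψ : ∀ j : ℕ, j < n → Differentiable ℝ (iteratedDeriv j ψ))
    (hne : ∀ k : ℕ, 1 ≤ k → k ≤ n → ∀ t : ℝ, iteratedDeriv (k - 1) ψ t ≠ 0)
    (hslit : ∀ k : ℕ, 1 ≤ k → k ≤ n → ∀ t : ℝ,
      iteratedDeriv (k - 1) ψ t + κ ∈ Complex.slitPlane) :
    ∀ t : ℝ, (ψ t)⁻¹ * iteratedDeriv n ψ t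
      = ∏ k ∈ Finset.Icc 1 n,
          (1 + κ * (iteratedDeriv (k - 1) ψ t)⁻¹) *
            deriv (fun s => Complex.log (iteratedDeriv (k - 1) ψ s + κ)) t := by
  intro t
  have hfac : ∀ k : ℕ, 1 ≤ k → k ≤ n →
      (1 + κ * (iteratedDeriv (k - 1) ψ t)⁻¹) *
        deriv (fun s => Complex.log (iteratedDeriv (k - 1) ψ s + κ)) t
      = iteratedDeriv k ψ t * (iteratedDeriv (k - 1) ψ t)⁻¹ := by
    intro k hk1 hkn
    have hklt : k - 1 < n := lt_of_lt_of_le (Nat.sub_lt hk1 one_pos) hkn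
    have hder : HasDerivAt (iteratedDeriv (k - 1) ψ) (iteratedDeriv k ψ t) t := by
      have hk' : k - 1 + 1 = k := Nat.succ_pred_eq_of_pos hk1
      rw [← hk', iteratedDeriv_succ]
      exact (hψ (k - 1) hklt t).hasDerivAt
    have hder' : HasDerivAt (fun s => iteratedDeriv (k - 1) ψ s + κ)
        (iteratedDeriv k ψ t) t := by simpa using hder.add_const κ
    have hlog := hder'.clog_real (hslit k hk1 hkn t)
    rw [hlog.deriv]
    have h0 : iteratedDeriv (k - 1) ψ t ≠ 0 := hne k hk1 hkn t
    have h1 : iteratedDeriv (k - 1) ψ t + κ ≠ 0 :=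
      Complex.slitPlane_ne_zero (hslit k hk1 hkn t)
    field_simp
  rw [Finset.prod_congr rfl (fun k hk => hfac k (Finset.mem_Icc.mp hk).1 (Finset.mem_Icc.mp hk).2)]
  -- telescoping
  have key : ∀ m : ℕ, m ≤ n →
      ∏ k ∈ Finset.Icc 1 m, iteratedDeriv k ψ t * (iteratedDeriv (k - 1) ψ t)⁻¹
        = iteratedDeriv m ψ t * (ψ t)⁻¹ := by
    intro m hm
    induction m with
    | zero =>
      have h0 : ψ t ≠ 0 := by simpa using hne 1 le_rfl hn t
      simp [iteratedDeriv_zero, mul_inv_cancel₀ h0]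
    | succ m ih =>
      rw [Finset.prod_Icc_succ_top (Nat.le_add_left 1 m), ih (le_of_lt (Nat.lt_of_succ_le hm))]
      have h0 : iteratedDeriv m ψ t ≠ 0 := by
        simpa using hne (m + 1) (Nat.le_add_left 1 m) hm t
      field_simp
      rw [Nat.add_sub_cancel, mul_comm (ψ t), mul_div_mul_left _ _ h0]
  rw [key n le_rfl]
  ring
end

section
/- Let κ ∈ ℂ, n ≥ 1 an integer, and let ψ : ℝ → ℂ be n-times differentiable such that for every 1 ≤ k ≤ n and every t ∈ ℝ, ∂^{k−1}ψ(t) ≠ 0 and ∂^{k−1}ψ(t) + κ lies in the slit plane (i.e., it is not a nonpositive real number). Define the alternative infinitesimal generators α_k(t) = Log(∂^{k−1}ψ(t) + κ) for 1 ≤ k ≤ n. Then for every t ∈ ℝ and every 1 ≤ k ≤ n, 1 − κ · exp(−α_k(t)) ≠ 0, and ψ(t)⁻¹ · ∂ⁿψ(t) = ∏_{k=1}^{n} (1 − κ · exp(−α_k(t)))⁻¹ · α_k'(t). -/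
/-- Scalar form of Corollary 3: with alternative generators `α_k = Log(∂^{k-1}ψ + κ)`,
`ψ⁻¹ ∂ⁿψ = ∏_{k=1}^n (1 − κ e^{−α_k})⁻¹ α_k'`. -/
theorem stmt_10 (κ : ℂ) (n : ℕ) (hn : 1 ≤ n)
    (ψ : ℝ → ℂ) (hψ : ∀ j : ℕ, j < n → Differentiable ℝ (iteratedDeriv j ψ))
    (hne : ∀ k : ℕ, 1 ≤ k → k ≤ n → ∀ t : ℝ, iteratedDeriv (k - 1) ψ t ≠ 0)
    (hslit : ∀ k : ℕ, 1 ≤ k → k ≤ n → ∀ t : ℝ,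
      iteratedDeriv (k - 1) ψ t + κ ∈ Complex.slitPlane)
    (α : ℕ → ℝ → ℂ)
    (hα : ∀ k : ℕ, 1 ≤ k → k ≤ n → ∀ t : ℝ,
      α k t = Complex.log (iteratedDeriv (k - 1) ψ t + κ)) :
    (∀ t : ℝ, ∀ k : ℕ, 1 ≤ k → k ≤ n → (1 - κ * Complex.exp (-α k t)) ≠ 0) ∧
      ∀ t : ℝ, (ψ t)⁻¹ * iteratedDeriv n ψ t
        = ∏ k ∈ Finset.Icc 1 n,
            (1 - κ * Complex.exp (-α k t))⁻¹ * deriv (α k) t := by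
  -- common facts
  have hsum_ne : ∀ k : ℕ, 1 ≤ k → k ≤ n → ∀ t : ℝ,
      iteratedDeriv (k - 1) ψ t + κ ≠ 0 := fun k h1 h2 t =>
    Complex.slitPlane_ne_zero (hslit k h1 h2 t)
  have hexp : ∀ k : ℕ, 1 ≤ k → k ≤ n → ∀ t : ℝ,
      Complex.exp (-α k t) = (iteratedDeriv (k - 1) ψ t + κ)⁻¹ := by
    intro k h1 h2 t
    rw [hα k h1 h2 t, Complex.exp_neg, Complex.exp_log (hsum_ne k h1 h2 t)]
  have hfac : ∀ k : ℕ, 1 ≤ k → k ≤ n → ∀ t : ℝ,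
      1 - κ * Complex.exp (-α k t)
        = iteratedDeriv (k - 1) ψ t / (iteratedDeriv (k - 1) ψ t + κ) := by
    intro k h1 h2 t
    rw [hexp k h1 h2 t]
    field_simp [hsum_ne k h1 h2 t]
    ring
  have hnz : ∀ t : ℝ, ∀ k : ℕ, 1 ≤ k → k ≤ n →
      (1 - κ * Complex.exp (-α k t)) ≠ 0 := by
    intro t k h1 h2
    rw [hfac k h1 h2 t]
    exact div_ne_zero (hne k h1 h2 t) (hsum_ne k h1 h2 t)
  refine ⟨hnz, fun t => ?_⟩
  -- derivative of α k
  have hderiv : ∀ k : ℕ, 1 ≤ k → k ≤ n →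
      deriv (α k) t = iteratedDeriv k ψ t / (iteratedDeriv (k - 1) ψ t + κ) := by
    intro k h1 h2
    have hdiff : HasDerivAt (fun s => iteratedDeriv (k - 1) ψ s + κ)
        (iteratedDeriv k ψ t) t := by
      have h0 : HasDerivAt (iteratedDeriv (k - 1) ψ)
          (deriv (iteratedDeriv (k - 1) ψ) t) t :=
        ((hψ (k - 1) (lt_of_lt_of_le (Nat.sub_lt h1 one_pos) h2)) t).hasDerivAt
      have : deriv (iteratedDeriv (k - 1) ψ) t = iteratedDeriv k ψ t := by
        rw [← iteratedDeriv_succ, Nat.sub_add_cancel h1]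
      rw [this] at h0
      exact h0.add_const κ
    have hlog := hdiff.clog_real (hslit k h1 h2 t)
    have : α k =ᶠ[nhds t] fun s => Complex.log (iteratedDeriv (k - 1) ψ s + κ) :=
      Filter.Eventually.of_forall (fun s => hα k h1 h2 s)
    rw [Filter.EventuallyEq.deriv_eq this, hlog.deriv]
  -- each factor equals ∂^k ψ / ∂^{k-1} ψ
  have hterm : ∀ k : ℕ, 1 ≤ k → k ≤ n →
      (1 - κ * Complex.exp (-α k t))⁻¹ * deriv (α k) t
        = iteratedDeriv k ψ t / iteratedDeriv (k - 1) ψ t := by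
    intro k h1 h2
    rw [hfac k h1 h2 t, hderiv k h1 h2]
    field_simp [hne k h1 h2 t, hsum_ne k h1 h2 t]
  rw [Finset.prod_congr rfl (fun k hk => by
    simp only [Finset.mem_Icc] at hk
    exact hterm k hk.1 hk.2)]
  -- telescoping
  have key : ∀ m : ℕ, m ≤ n →
      ∏ k ∈ Finset.Icc 1 m, iteratedDeriv k ψ t / iteratedDeriv (k - 1) ψ t
        = iteratedDeriv m ψ t / ψ t := by
    intro m
    induction m with
    | zero =>
      intro _
      have hψne : ψ t ≠ 0 := by simpa using hne 1 le_rfl hn t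
      simp [div_self hψne]
    | succ m ih =>
      intro hm
      have hm' : m ≤ n := Nat.le_of_succ_le hm
      rw [Finset.prod_Icc_succ_top (Nat.succ_le_succ (Nat.zero_le m)), ih hm']
      have hmne : iteratedDeriv m ψ t ≠ 0 := by
        have := hne (m + 1) (Nat.succ_le_succ (Nat.zero_le m)) hm t
        simpa using this
      have hψne : ψ t ≠ 0 := by
        have := hne 1 le_rfl hn t
        simpa [iteratedDeriv_zero] using this
      simp only [Nat.add_sub_cancel]
      field_simp
  rw [key n le_rfl, div_eq_inv_mul]
end
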